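/- (Lemma, lower bound on joints) There is a constant C_n > 0 depending only on n with the following property: let L be a finite set of lines in ℝ^n, J its set of joints, and J' ⊆ J a subset such that every line ℓ ∈ L with ℓ ∩ J' ≠ ∅ satisfies |ℓ ∩ J'| ≥ m. If J' is nonempty, then |J'| ≥ C_n · m^n. -/

import Mathlib

open MvPolynomial

/-- A line in ℝⁿ, given by a base point and a nonzero direction vector. -/
structure Line (n : ℕ) where
  p : Fin n → ℝ
  v : Fin n → ℝ
  hv : v ≠ 0

/-- The set of points of a line. -/
def Line.carrier {n : ℕ} (ℓ : Line n) : Set (Fin n → ℝ) :=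
  {x | ∃ t : ℝ, x = ℓ.p + t • ℓ.v}

/-- `x` is a joint of the collection of lines `L`: it lies on `n` lines of `L`
whose directions are linearly independent. -/
def IsJoint {n : ℕ} (L : Finset (Line n)) (x : Fin n → ℝ) : Prop :=
  ∃ f : Fin n → Line n, (∀ i, f i ∈ L) ∧ (∀ i, x ∈ (f i).carrier) ∧
    LinearIndependent ℝ (fun i => (f i).v)

/-- The set of joints of `L`. -/
def joints {n : ℕ} (L : Finset (Line n)) : Set (Fin n → ℝ) :=
  {x | IsJoint L x}

section Aux

variable {n : ℕ}


variable {n : ℕ}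

noncomputable def lineP (x v : Fin n → ℝ) (P : MvPolynomial (Fin n) ℝ) : Polynomial ℝ :=
  MvPolynomial.aeval (fun i => Polynomial.C (x i) + Polynomial.C (v i) * Polynomial.X) P

lemma lineP_eval (x v : Fin n → ℝ) (P : MvPolynomial (Fin n) ℝ) (t : ℝ) :
    (lineP x v P).eval t = MvPolynomial.eval (x + t • v) P := by
  unfold lineP
  induction P using MvPolynomial.induction_on with
  | C a => simp
  | add p q hp hq => simp [hp, hq]
  | mul_X p i hp =>
    simp only [map_mul, MvPolynomial.aeval_X, Polynomial.eval_mul, Polynomial.eval_add,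
      Polynomial.eval_C, Polynomial.eval_X, hp, MvPolynomial.eval_mul, MvPolynomial.eval_X,
      Pi.add_apply, Pi.smul_apply, smul_eq_mul]
    ring

lemma lineP_natDegree_le (x v : Fin n → ℝ) (P : MvPolynomial (Fin n) ℝ) :
    (lineP x v P).natDegree ≤ P.totalDegree := by
  conv_lhs => rw [P.as_sum]
  unfold lineP
  rw [map_sum]
  refine (Polynomial.natDegree_sum_le _ _).trans ?_
  rw [Finset.fold_max_le]
  refine ⟨Nat.zero_le _, ?_⟩
  intro d hd
  simp only [Function.comp_apply, MvPolynomial.aeval_monomial]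
  refine Polynomial.natDegree_mul_le.trans ?_
  have h1 : (algebraMap ℝ (Polynomial ℝ) (MvPolynomial.coeff d P)).natDegree = 0 := by
    simp [Polynomial.natDegree_C]
  rw [h1, zero_add]
  refine le_trans ?_ (MvPolynomial.le_totalDegree hd)
  rw [Finsupp.prod_fintype _ _ (fun i => pow_zero _), Finsupp.sum_fintype _ _ (fun i => rfl)]
  refine (Polynomial.natDegree_prod_le _ _).trans ?_
  refine Finset.sum_le_sum fun i _ => ?_
  refine (Polynomial.natDegree_pow_le).trans ?_
  have h2 : (Polynomial.C (x i) + Polynomial.C (v i) * Polynomial.X).natDegree ≤ 1 := by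
    refine (Polynomial.natDegree_add_le _ _).trans ?_
    simp only [Polynomial.natDegree_C, max_le_iff]
    exact ⟨Nat.zero_le _, Polynomial.natDegree_mul_le.trans
      (by simp [Polynomial.natDegree_C, Polynomial.natDegree_X_le])⟩
  simpa using Nat.mul_le_mul le_rfl h2

lemma lineP_coeff_zero (x v : Fin n → ℝ) (P : MvPolynomial (Fin n) ℝ) :
    (lineP x v P).coeff 0 = MvPolynomial.eval x P := by
  rw [Polynomial.coeff_zero_eq_eval_zero, lineP_eval]
  simp

lemma lineP_coeff_one (x v : Fin n → ℝ) (P : MvPolynomial (Fin n) ℝ) :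
    (lineP x v P).coeff 1 = ∑ i, v i * MvPolynomial.eval x (pderiv i P) := by
  have key : ∀ P : MvPolynomial (Fin n) ℝ,
      (lineP x v P).coeff 1 = ∑ i, v i * MvPolynomial.eval x (pderiv i P) := by
    intro P
    unfold lineP
    induction P using MvPolynomial.induction_on with
    | C a => simp
    | add p q hp hq => simp [hp, hq, Finset.sum_add_distrib, mul_add]
    | mul_X p i hp =>
      rw [map_mul, MvPolynomial.aeval_X, mul_add, Polynomial.coeff_add, Polynomial.coeff_mul_C]
      rw [show (MvPolynomial.aeval fun i => Polynomial.C (x i) + Polynomial.C (v i) * Polynomial.X) p *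
        (Polynomial.C (v i) * Polynomial.X) = Polynomial.C (v i) *
        ((MvPolynomial.aeval fun i => Polynomial.C (x i) + Polynomial.C (v i) * Polynomial.X) p
          * Polynomial.X) by ring]
      rw [Polynomial.coeff_C_mul, Polynomial.coeff_mul_X, hp]
      have step : ∀ j : Fin n, v j * MvPolynomial.eval x (pderiv j (p * MvPolynomial.X i)) =
          x i * (v j * MvPolynomial.eval x (pderiv j p)) +
          (if j = i then v i * MvPolynomial.eval x p else 0) := by
        intro j
        rw [pderiv_mul]
        by_cases h : j = i
        · subst h; simp [MvPolynomial.pderiv_X_self]; ring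
        · simp [MvPolynomial.pderiv_X_of_ne (Ne.symm h), h]; ring
      rw [Finset.sum_congr rfl (fun j _ => step j), Finset.sum_add_distrib, ← Finset.mul_sum,
        Finset.sum_ite_eq' Finset.univ i]
      have := lineP_coeff_zero x v p
      unfold lineP at this
      rw [this]
      simp [mul_comm]
  exact key P




lemma coeff_pderiv' (i : Fin n) (P : MvPolynomial (Fin n) ℝ) (m : Fin n →₀ ℕ) :
    MvPolynomial.coeff m (pderiv i P) = ((m i : ℝ) + 1) * MvPolynomial.coeff (m + Finsupp.single i 1) P := by
  induction P using MvPolynomial.induction_on' with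
  | add p q hp hq => simp [hp, hq]; ring
  | monomial d a =>
    rw [pderiv_monomial, MvPolynomial.coeff_monomial, MvPolynomial.coeff_monomial]
    by_cases h : d = m + Finsupp.single i 1
    · subst h
      have h1 : m + Finsupp.single i 1 - Finsupp.single i 1 = m := add_tsub_cancel_right ..
      have h2 : (m + Finsupp.single i 1 : Fin n →₀ ℕ) i = m i + 1 := by
        rw [Finsupp.add_apply, Finsupp.single_eq_same]
      rw [if_pos h1, if_pos rfl, h2]
      push_cast; ring
    · rw [if_neg h]
      by_cases h2 : d - Finsupp.single i 1 = m
      · rw [if_pos h2]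
        have hdi : d i = 0 := by
          by_contra hdi
          apply h
          have hle : Finsupp.single i 1 ≤ d := Finsupp.single_le_iff.mpr (by omega)
          rw [← h2, tsub_add_cancel_of_le hle]
        simp [hdi]
      · simp [h2]

lemma pderiv_totalDegree_lt (i : Fin n) (P : MvPolynomial (Fin n) ℝ) (h : pderiv i P ≠ 0) :
    (pderiv i P).totalDegree < P.totalDegree := by
  have hmem : ∀ m ∈ (pderiv i P).support, (m.sum fun _ e => e) + 1 ≤ P.totalDegree := by
    intro m hm
    rw [MvPolynomial.mem_support_iff, coeff_pderiv'] at hm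
    have : MvPolynomial.coeff (m + Finsupp.single i 1) P ≠ 0 := by
      intro h0; rw [h0, mul_zero] at hm; exact hm rfl
    have := MvPolynomial.le_totalDegree (MvPolynomial.mem_support_iff.mpr this)
    rwa [Finsupp.sum_add_index' (fun _ => rfl) (fun _ _ _ => rfl),
      Finsupp.sum_single_index rfl] at this
  obtain ⟨m0, hm0⟩ := MvPolynomial.support_nonempty.mpr h
  rw [MvPolynomial.totalDegree, Finset.sup_lt_iff]
  · intro m hm; have := hmem m hm; omega
  · have := hmem m0 hm0
    simp only [bot_eq_zero']
    omega

lemma exists_pderiv_ne_zero (P : MvPolynomial (Fin n) ℝ) (h : P.totalDegree ≠ 0) :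
    ∃ i, pderiv i P ≠ 0 := by
  have hP : P ≠ 0 := by rintro rfl; simp at h
  obtain ⟨d, hd, hsup⟩ := Finset.exists_mem_eq_sup P.support
    (MvPolynomial.support_nonempty.mpr hP) (fun d => d.sum fun _ e => e)
  rw [MvPolynomial.totalDegree, hsup] at h
  have : ∃ i, d i ≠ 0 := by
    by_contra hc
    push_neg at hc
    apply h
    rw [Finsupp.sum_fintype _ _ (fun _ => rfl)]
    simp [hc]
  obtain ⟨i, hi⟩ := this
  refine ⟨i, fun h0 => ?_⟩
  have hz : MvPolynomial.coeff (d - Finsupp.single i 1) (pderiv i P) = 0 := by rw [h0]; simp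
  rw [coeff_pderiv'] at hz
  have hle : Finsupp.single i 1 ≤ d := Finsupp.single_le_iff.mpr (by omega)
  rw [tsub_add_cancel_of_le hle] at hz
  rcases mul_eq_zero.mp hz with h1 | h1
  · have h2 : (0:ℝ) < (((d - Finsupp.single i 1 : Fin n →₀ ℕ)) i : ℝ) + 1 := by positivity
    exact absurd h1 (ne_of_gt h2)
  · exact (MvPolynomial.mem_support_iff.mp hd) h1




lemma exists_vanishing_poly (S : Finset (Fin n → ℝ)) (k : ℕ) (hcard : S.card < (k+1)^n) :
    ∃ P : MvPolynomial (Fin n) ℝ, P ≠ 0 ∧ P.totalDegree ≤ n * k ∧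
      ∀ x ∈ S, MvPolynomial.eval x P = 0 := by
  classical
  -- exponent embedding
  let toF : (Fin n → Fin (k+1)) → (Fin n →₀ ℕ) :=
    fun e => Finsupp.equivFunOnFinite.symm (fun i => (e i : ℕ))
  have toF_inj : Function.Injective toF := by
    intro a b hab
    have := congrArg (fun f => (Finsupp.equivFunOnFinite f : Fin n → ℕ)) hab
    simp only [toF, Equiv.apply_symm_apply] at this
    funext i
    exact Fin.ext (congrFun this i)
  have toF_apply : ∀ e i, toF e i = (e i : ℕ) := fun e i => rfl
  -- the evaluation linear map
  let Φ : ((Fin n → Fin (k+1)) → ℝ) →ₗ[ℝ] (S → ℝ) :=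
    { toFun := fun c => fun x => ∑ e, c e * ∏ i, (x : Fin n → ℝ) i ^ (e i : ℕ)
      map_add' := by
        intro c d; funext x; simp [add_mul, Finset.sum_add_distrib]
      map_smul' := by
        intro r c; funext x; simp [Finset.mul_sum, mul_assoc] }
  have hnotinj : ¬ Function.Injective Φ := by
    intro hinj
    have h1 := LinearMap.finrank_le_finrank_of_injective hinj
    rw [Module.finrank_fintype_fun_eq_card, Module.finrank_fintype_fun_eq_card] at h1
    simp only [Fintype.card_fun, Fintype.card_fin, Fintype.card_coe] at h1
    omega
  rw [injective_iff_map_eq_zero] at hnotinj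
  push_neg at hnotinj
  obtain ⟨c, hc0, hcne⟩ := hnotinj
  obtain ⟨e0, he0⟩ := Function.ne_iff.mp hcne
  refine ⟨∑ e, MvPolynomial.monomial (toF e) (c e), ?_, ?_, ?_⟩
  · intro h0
    have : MvPolynomial.coeff (toF e0) (∑ e, MvPolynomial.monomial (toF e) (c e)) = 0 := by
      rw [h0]; simp
    rw [MvPolynomial.coeff_sum] at this
    rw [Finset.sum_eq_single e0 (fun e _ hne => by
        rw [MvPolynomial.coeff_monomial, if_neg (fun h => hne (toF_inj h))])
      (by simp)] at this
    rw [MvPolynomial.coeff_monomial, if_pos rfl] at this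
    exact he0 this
  · refine (MvPolynomial.totalDegree_finset_sum _ _).trans ?_
    refine Finset.sup_le fun e _ => ?_
    refine (MvPolynomial.totalDegree_monomial_le _ _).trans ?_
    rw [Finsupp.sum_fintype _ _ (fun _ => rfl)]
    calc (∑ i, ((e i : ℕ))) ≤ ∑ _i : Fin n, k := Finset.sum_le_sum fun i _ => by omega
    _ = n * k := by simp [Finset.sum_const, mul_comm]
  · intro x hx
    have := congrFun hc0 ⟨x, hx⟩
    simp only [Pi.zero_apply] at this
    rw [map_sum]
    have h' : ∑ e, c e * ∏ i, (x : Fin n → ℝ) i ^ (e i : ℕ) = 0 := this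
    simpa [MvPolynomial.eval_monomial, Finsupp.prod_fintype _ _ (fun _ => pow_zero _), toF_apply] using h'

lemma dir_vanish (J' : Finset (Fin n → ℝ)) (m : ℕ) (P : MvPolynomial (Fin n) ℝ)
    (hdeg : P.totalDegree < m) (hvan : ∀ y ∈ J', MvPolynomial.eval y P = 0)
    (ℓ : Line n) (x : Fin n → ℝ) (hx : x ∈ ℓ.carrier)
    (hcard : m ≤ ((J' : Set (Fin n → ℝ)) ∩ ℓ.carrier).ncard) :
    ∑ i, ℓ.v i * MvPolynomial.eval x (pderiv i P) = 0 := by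
  classical
  set T : Finset (Fin n → ℝ) := J'.filter (· ∈ ℓ.carrier) with hT
  have hTset : ((J' : Set (Fin n → ℝ)) ∩ ℓ.carrier) = (T : Set (Fin n → ℝ)) := by
    ext y; simp [hT, Set.mem_inter_iff]
  have hmT : m ≤ T.card := by
    rwa [hTset, Set.ncard_coe_finset] at hcard
  -- parametrization of points of T
  have hparam : ∀ y ∈ T, ∃ s : ℝ, y = x + s • ℓ.v := by
    intro y hy
    obtain ⟨a, ha⟩ := hx
    obtain ⟨b, hb⟩ := (Finset.mem_filter.mp hy).2
    refine ⟨b - a, ?_⟩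
    rw [ha, hb]; funext i; simp; ring
  choose! g hg using hparam
  have hginj : ∀ y ∈ T, ∀ z ∈ T, g y = g z → y = z := by
    intro y hy z hz hgz
    rw [hg y hy, hg z hz, hgz]
  set q := lineP x ℓ.v P with hq
  have hq0 : q = 0 := by
    refine Polynomial.eq_zero_of_natDegree_lt_card_of_eval_eq_zero q
      (f := fun y : T => g y) (fun y z hyz => Subtype.ext (hginj _ y.2 _ z.2 hyz)) ?_ ?_
    · intro y
      rw [hq, lineP_eval, ← hg _ y.2]
      exact hvan _ (Finset.mem_filter.mp y.2).1
    · calc q.natDegree ≤ P.totalDegree := lineP_natDegree_le x ℓ.v P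
        _ < m := hdeg
        _ ≤ T.card := hmT
        _ = Fintype.card T := (Fintype.card_coe T).symm
  have := lineP_coeff_one x ℓ.v P
  rw [← hq, hq0] at this
  simpa using this.symm

lemma grad_vanish (hn : 0 < n) (L : Finset (Line n)) (J' : Finset (Fin n → ℝ)) (m : ℕ)
    (P : MvPolynomial (Fin n) ℝ) (hdeg : P.totalDegree < m)
    (hvan : ∀ y ∈ J', MvPolynomial.eval y P = 0)
    (hm : ∀ ℓ ∈ L, ((J' : Set (Fin n → ℝ)) ∩ ℓ.carrier).Nonempty →
      m ≤ ((J' : Set (Fin n → ℝ)) ∩ ℓ.carrier).ncard)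
    (x : Fin n → ℝ) (hxJ : x ∈ J') (hjoint : IsJoint L x) :
    ∀ j, MvPolynomial.eval x (pderiv j P) = 0 := by
  haveI : Nonempty (Fin n) := ⟨⟨0, hn⟩⟩
  obtain ⟨f, hfL, hfx, hind⟩ := hjoint
  set w : Fin n → ℝ := fun j => MvPolynomial.eval x (pderiv j P) with hw
  have hdir : ∀ k, ∑ i, (f k).v i * w i = 0 := by
    intro k
    refine dir_vanish J' m P hdeg hvan (f k) x (hfx k) ?_
    exact hm (f k) (hfL k) ⟨x, Finset.mem_coe.mpr hxJ, hfx k⟩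
  set φ : (Fin n → ℝ) →ₗ[ℝ] ℝ := ∑ j, w j • (LinearMap.proj j) with hφ
  have hφapply : ∀ u : Fin n → ℝ, φ u = ∑ j, w j * u j := by
    intro u; simp [hφ, LinearMap.proj]
  have hspan : Submodule.span ℝ (Set.range fun k => (f k).v) = ⊤ :=
    hind.span_eq_top_of_card_eq_finrank (by simp)
  have hφ0 : φ = 0 := by
    refine LinearMap.ext_on hspan ?_
    rintro u ⟨k, rfl⟩
    rw [hφapply]
    simpa [mul_comm] using hdir k
  intro j
  have h2 : φ (Pi.single j 1) = 0 := by rw [hφ0]; simp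
  rw [hφapply] at h2
  rw [Finset.sum_eq_single j (fun i _ hne => by simp [Pi.single_eq_of_ne hne]) (by simp)] at h2
  simpa [hw] using h2

lemma vanish_zero (hn : 0 < n) (L : Finset (Line n)) (J' : Finset (Fin n → ℝ)) (m : ℕ)
    (hJ : ∀ x ∈ J', IsJoint L x)
    (hm : ∀ ℓ ∈ L, ((J' : Set (Fin n → ℝ)) ∩ ℓ.carrier).Nonempty →
      m ≤ ((J' : Set (Fin n → ℝ)) ∩ ℓ.carrier).ncard)
    (hne : J'.Nonempty) :
    ∀ (P : MvPolynomial (Fin n) ℝ), P.totalDegree < m →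
      (∀ x ∈ J', MvPolynomial.eval x P = 0) → P = 0 := by
  suffices H : ∀ t : ℕ, ∀ P : MvPolynomial (Fin n) ℝ, P.totalDegree = t →
      P.totalDegree < m → (∀ x ∈ J', MvPolynomial.eval x P = 0) → P = 0 by
    intro P hdeg hvan; exact H _ P rfl hdeg hvan
  intro t
  induction t using Nat.strong_induction_on with
  | _ t IH =>
  intro P ht hdeg hvan
  by_contra hP
  by_cases h0 : P.totalDegree = 0
  · -- constant polynomial
    have hsupp : P.support ⊆ {0} := by
      intro d hd
      rw [Finset.mem_singleton]
      ext j
      exact (MvPolynomial.totalDegree_eq_zero_iff _ P).mp h0 d hd j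
    obtain ⟨x₀, hx₀⟩ := hne
    have hsne : P.support.Nonempty := MvPolynomial.support_nonempty.mpr hP
    have hsupp0 : P.support = {0} := by
      rcases Finset.subset_singleton_iff.mp hsupp with h | h
      · exact absurd h (Finset.nonempty_iff_ne_empty.mp hsne)
      · exact h
    have heval : MvPolynomial.eval x₀ P = MvPolynomial.coeff 0 P := by
      rw [MvPolynomial.eval_eq, hsupp0]
      simp
    have hc0 : MvPolynomial.coeff 0 P ≠ 0 := by
      rw [← MvPolynomial.mem_support_iff, hsupp0]; simp
    exact hc0 (heval ▸ hvan x₀ hx₀)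
  · obtain ⟨i, hi⟩ := exists_pderiv_ne_zero P h0
    have hlt := pderiv_totalDegree_lt i P hi
    have hvan' : ∀ x ∈ J', MvPolynomial.eval x (pderiv i P) = 0 := by
      intro x hx
      exact grad_vanish hn L J' m P hdeg hvan hm x hx (hJ x hx) i
    exact hi (IH (pderiv i P).totalDegree (by omega) (pderiv i P) rfl (by omega) hvan')


end Aux

theorem stmt_7 (n : ℕ) (hn : 2 ≤ n) :
    ∃ C : ℝ, 0 < C ∧
      ∀ (L : Finset (Line n)) (J' : Finset (Fin n → ℝ)) (m : ℕ),
        (∀ x ∈ J', IsJoint L x) →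
        (∀ ℓ ∈ L, ((J' : Set (Fin n → ℝ)) ∩ ℓ.carrier).Nonempty →
          m ≤ ((J' : Set (Fin n → ℝ)) ∩ ℓ.carrier).ncard) →
        J'.Nonempty →
        C * (m : ℝ) ^ n ≤ (J'.card : ℝ) := by
  have hn0 : 0 < n := by omega
  have hnR : (0:ℝ) < (n:ℝ) := by exact_mod_cast hn0
  refine ⟨1 / (n:ℝ)^n, by positivity, ?_⟩
  intro L J' m hJ hm hne
  by_contra hcon
  push_neg at hcon
  have hcard0 : (0:ℝ) ≤ (J'.card : ℝ) := by positivity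
  have hm1 : 1 ≤ m := by
    rcases Nat.eq_zero_or_pos m with h | h
    · subst h
      simp only [Nat.cast_zero] at hcon
      rw [zero_pow (by omega), mul_zero] at hcon
      linarith
    · exact h
  set k := (m-1)/n with hk
  have hdm := Nat.div_add_mod (m-1) n
  have hmod := Nat.mod_lt (m-1) hn0
  rw [← hk] at hdm
  have hnk : n * k ≤ m - 1 := by omega
  have hexp : n * (k+1) = n * k + n := by ring
  have hm_le : m ≤ n * (k+1) := by omega
  have hcard : J'.card < (k+1)^n := by
    have h1 : ((J'.card : ℝ)) < ((m:ℝ)/(n:ℝ))^n := by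
      rw [div_pow]
      calc ((J'.card : ℝ)) < 1 / (n:ℝ)^n * (m:ℝ)^n := hcon
        _ = (m:ℝ)^n / (n:ℝ)^n := by ring
    have h2 : (m:ℝ)/(n:ℝ) ≤ ((k:ℝ)+1) := by
      rw [div_le_iff₀ hnR]
      have : (m:ℝ) ≤ ((n * (k+1) : ℕ) : ℝ) := by exact_mod_cast hm_le
      push_cast at this ⊢
      linarith
    have h3 : ((J'.card : ℝ)) < ((k:ℝ)+1)^n :=
      lt_of_lt_of_le h1 (pow_le_pow_left₀ (by positivity) h2 n)
    have := h3
    push_cast at this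
    exact_mod_cast this
  obtain ⟨P, hP0, hPdeg, hPvan⟩ := exists_vanishing_poly J' k hcard
  exact hP0 (vanish_zero hn0 L J' m hJ hm hne P (by omega) hPvan)
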